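/- Let (Ω, A, P) be a probability space and let F_1, F_2, G_1, G_2 be sub-σ-algebras such that the σ-algebra σ(F_1, F_2) is independent of σ(G_1, G_2). Then the β-mixing coefficient satisfies β(σ(F_1, G_1), σ(F_2, G_2)) ≤ β(F_1, F_2) + β(G_1, G_2), where β(A, B) = (1/2) sup Σ_{i,j} |P(A_i ∩ B_j) − P(A_i) P(B_j)|, the supremum taken over all finite partitions {A_i} ⊂ A and {B_j} ⊂ B of Ω. -/

import Mathlib

open MeasureTheory

/-- The β-mixing (absolute regularity) coefficient between two sub-σ-algebras `𝓐` and `𝓑`: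
`β(𝓐,𝓑) = (1/2) sup Σ_{i,j} |P(A_i ∩ B_j) − P(A_i)P(B_j)|`, supremum over finite
measurable partitions of `Ω`. -/
noncomputable def betaMix {Ω : Type*} [MeasurableSpace Ω] (μ : Measure Ω)
    (𝓐 𝓑 : MeasurableSpace Ω) : ℝ :=
  sSup {x : ℝ | ∃ (n m : ℕ) (A : Fin n → Set Ω) (B : Fin m → Set Ω),
    (∀ i, MeasurableSet[𝓐] (A i)) ∧ (∀ j, MeasurableSet[𝓑] (B j)) ∧
    Pairwise (Function.onFun Disjoint A) ∧ Pairwise (Function.onFun Disjoint B) ∧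
    (⋃ i, A i) = Set.univ ∧ (⋃ j, B j) = Set.univ ∧
    x = (1 / 2) * ∑ i, ∑ j,
      |(μ (A i ∩ B j)).toReal - (μ (A i)).toReal * (μ (B j)).toReal|}

namespace BetaMixAux

variable {Ω : Type*} {m0 : MeasurableSpace Ω} (μ : Measure Ω) [IsProbabilityMeasure μ]



/-- Sum of measures of a finite measurable partition is 1. -/
lemma sum_measure_partition {ι : Type*} [Fintype ι] {A : ι → Set Ω}
    (hm : ∀ i, MeasurableSet (A i)) (hd : Pairwise (Function.onFun Disjoint A))
    (hu : (⋃ i, A i) = Set.univ) :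
    ∑ i, (μ (A i)).toReal = 1 := by
  have h1 : μ (⋃ i ∈ Finset.univ, A i) = ∑ i, μ (A i) :=
    measure_biUnion_finset (hd.set_pairwise _) (fun i _ => hm i)
  rw [show (⋃ i ∈ Finset.univ, A i) = ⋃ i, A i by simp, hu, measure_univ] at h1
  have := congrArg ENNReal.toReal h1
  rw [ENNReal.toReal_sum (fun i _ => measure_ne_top μ _)] at this
  simpa using this.symm

lemma prod_pairwise_disjoint {ι κ : Type*} {A : ι → Set Ω} {B : κ → Set Ω}
    (hdA : Pairwise (Function.onFun Disjoint A)) (hdB : Pairwise (Function.onFun Disjoint B)) :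
    Pairwise (Function.onFun Disjoint (fun p : ι × κ => A p.1 ∩ B p.2)) := by
  rintro ⟨i, j⟩ ⟨i', j'⟩ hne
  rcases eq_or_ne i i' with rfl | hi
  · have hj : j ≠ j' := by simpa using hne
    exact Disjoint.mono Set.inter_subset_right Set.inter_subset_right (hdB hj)
  · exact Disjoint.mono Set.inter_subset_left Set.inter_subset_left (hdA hi)

lemma prod_iUnion_univ {ι κ : Type*} {A : ι → Set Ω} {B : κ → Set Ω}
    (huA : (⋃ i, A i) = Set.univ) (huB : (⋃ j, B j) = Set.univ) :
    (⋃ p : ι × κ, A p.1 ∩ B p.2) = Set.univ := by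
  ext x
  simp only [Set.mem_iUnion, Set.mem_univ, iff_true, Set.mem_inter_iff, Prod.exists]
  have hx1 : x ∈ ⋃ i, A i := huA ▸ Set.mem_univ x
  have hx2 : x ∈ ⋃ j, B j := huB ▸ Set.mem_univ x
  rcases Set.mem_iUnion.1 hx1 with ⟨i, hi⟩
  rcases Set.mem_iUnion.1 hx2 with ⟨j, hj⟩
  exact ⟨i, j, hi, hj⟩

/-- double sum of measures of product partition cells is 1 -/
lemma sum_sum_measure_inter {ι κ : Type*} [Fintype ι] [Fintype κ] {A : ι → Set Ω} {B : κ → Set Ω}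
    (hmA : ∀ i, MeasurableSet (A i)) (hmB : ∀ j, MeasurableSet (B j))
    (hdA : Pairwise (Function.onFun Disjoint A)) (hdB : Pairwise (Function.onFun Disjoint B))
    (huA : (⋃ i, A i) = Set.univ) (huB : (⋃ j, B j) = Set.univ) :
    ∑ i, ∑ j, (μ (A i ∩ B j)).toReal = 1 := by
  have := sum_measure_partition μ (ι := ι × κ) (A := fun p => A p.1 ∩ B p.2)
    (fun p => (hmA p.1).inter (hmB p.2)) (prod_pairwise_disjoint hdA hdB)
    (prod_iUnion_univ huA huB)
  rwa [Fintype.sum_prod_type] at this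

lemma sum_sum_mul_measure {ι κ : Type*} [Fintype ι] [Fintype κ] {A : ι → Set Ω} {B : κ → Set Ω}
    (hmA : ∀ i, MeasurableSet (A i)) (hmB : ∀ j, MeasurableSet (B j))
    (hdA : Pairwise (Function.onFun Disjoint A)) (hdB : Pairwise (Function.onFun Disjoint B))
    (huA : (⋃ i, A i) = Set.univ) (huB : (⋃ j, B j) = Set.univ) :
    ∑ i, ∑ j, (μ (A i)).toReal * (μ (B j)).toReal = 1 := by
  have h1 := sum_measure_partition μ hmA hdA huA
  have h2 := sum_measure_partition μ hmB hdB huB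
  calc ∑ i, ∑ j, (μ (A i)).toReal * (μ (B j)).toReal
      = (∑ i, (μ (A i)).toReal) * (∑ j, (μ (B j)).toReal) := by
        rw [Finset.sum_mul_sum]
    _ = 1 := by rw [h1, h2, one_mul]



def betaSet (𝓐 𝓑 : MeasurableSpace Ω) : Set ℝ :=
  {x : ℝ | ∃ (n m : ℕ) (A : Fin n → Set Ω) (B : Fin m → Set Ω),
    (∀ i, MeasurableSet[𝓐] (A i)) ∧ (∀ j, MeasurableSet[𝓑] (B j)) ∧
    Pairwise (Function.onFun Disjoint A) ∧ Pairwise (Function.onFun Disjoint B) ∧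
    (⋃ i, A i) = Set.univ ∧ (⋃ j, B j) = Set.univ ∧
    x = (1 / 2) * ∑ i, ∑ j,
      |(μ (A i ∩ B j)).toReal - (μ (A i)).toReal * (μ (B j)).toReal|}

omit [IsProbabilityMeasure μ] in
lemma betaMix_eq_sSup (𝓐 𝓑 : MeasurableSpace Ω) :
    @betaMix Ω m0 μ 𝓐 𝓑 = sSup (betaSet μ 𝓐 𝓑) := rfl

lemma sum_abs_le_two {ι κ : Type*} [Fintype ι] [Fintype κ] {A : ι → Set Ω} {B : κ → Set Ω}
    (hmA : ∀ i, MeasurableSet (A i)) (hmB : ∀ j, MeasurableSet (B j))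
    (hdA : Pairwise (Function.onFun Disjoint A)) (hdB : Pairwise (Function.onFun Disjoint B))
    (huA : (⋃ i, A i) = Set.univ) (huB : (⋃ j, B j) = Set.univ) :
    ∑ i, ∑ j, |(μ (A i ∩ B j)).toReal - (μ (A i)).toReal * (μ (B j)).toReal| ≤ 2 := by
  have hle : ∀ i j, |(μ (A i ∩ B j)).toReal - (μ (A i)).toReal * (μ (B j)).toReal|
      ≤ (μ (A i ∩ B j)).toReal + (μ (A i)).toReal * (μ (B j)).toReal := by
    intro i j
    have h1 : (0:ℝ) ≤ (μ (A i ∩ B j)).toReal := ENNReal.toReal_nonneg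
    have h2 : (0:ℝ) ≤ (μ (A i)).toReal * (μ (B j)).toReal :=
      mul_nonneg ENNReal.toReal_nonneg ENNReal.toReal_nonneg
    rw [abs_sub_le_iff]; constructor <;> linarith
  calc ∑ i, ∑ j, |(μ (A i ∩ B j)).toReal - (μ (A i)).toReal * (μ (B j)).toReal|
      ≤ ∑ i, ∑ j, ((μ (A i ∩ B j)).toReal + (μ (A i)).toReal * (μ (B j)).toReal) :=
        Finset.sum_le_sum fun i _ => Finset.sum_le_sum fun j _ => hle i j
    _ = (∑ i, ∑ j, (μ (A i ∩ B j)).toReal) + ∑ i, ∑ j, (μ (A i)).toReal * (μ (B j)).toReal := by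
        rw [← Finset.sum_add_distrib]
        exact Finset.sum_congr rfl fun i _ => Finset.sum_add_distrib
    _ = 1 + 1 := by
        rw [sum_sum_measure_inter μ hmA hmB hdA hdB huA huB,
          sum_sum_mul_measure μ hmA hmB hdA hdB huA huB]
    _ = 2 := by norm_num

lemma betaSet_le_one {𝓐 𝓑 : MeasurableSpace Ω} (h𝓐 : 𝓐 ≤ m0) (h𝓑 : 𝓑 ≤ m0) :
    ∀ x ∈ betaSet μ 𝓐 𝓑, x ≤ 1 := by
  rintro x ⟨n, m, A, B, hA, hB, hdA, hdB, huA, huB, rfl⟩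
  have := sum_abs_le_two μ (fun i => h𝓐 _ (hA i)) (fun j => h𝓑 _ (hB j)) hdA hdB huA huB
  linarith

lemma betaSet_bddAbove {𝓐 𝓑 : MeasurableSpace Ω} (h𝓐 : 𝓐 ≤ m0) (h𝓑 : 𝓑 ≤ m0) :
    BddAbove (betaSet μ 𝓐 𝓑) :=
  ⟨1, fun x hx => betaSet_le_one μ h𝓐 h𝓑 x hx⟩

lemma zero_mem_betaSet (𝓐 𝓑 : MeasurableSpace Ω) : (0:ℝ) ∈ betaSet μ 𝓐 𝓑 := by
  refine ⟨1, 1, fun _ => Set.univ, fun _ => Set.univ, fun _ => MeasurableSet.univ,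
    fun _ => MeasurableSet.univ, Subsingleton.pairwise, Subsingleton.pairwise, Set.iUnion_const _, Set.iUnion_const _, ?_⟩
  simp

lemma betaMix_nonneg {𝓐 𝓑 : MeasurableSpace Ω} (h𝓐 : 𝓐 ≤ m0) (h𝓑 : 𝓑 ≤ m0) :
    0 ≤ @betaMix Ω m0 μ 𝓐 𝓑 :=
  le_csSup (betaSet_bddAbove μ h𝓐 h𝓑) (zero_mem_betaSet μ 𝓐 𝓑)

/-- Partition sums over arbitrary fintypes are bounded by `betaMix`. -/
lemma le_betaMix {𝓐 𝓑 : MeasurableSpace Ω} (h𝓐 : 𝓐 ≤ m0) (h𝓑 : 𝓑 ≤ m0)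
    {ι κ : Type*} [Fintype ι] [Fintype κ] {A : ι → Set Ω} {B : κ → Set Ω}
    (hA : ∀ i, MeasurableSet[𝓐] (A i)) (hB : ∀ j, MeasurableSet[𝓑] (B j))
    (hdA : Pairwise (Function.onFun Disjoint A)) (hdB : Pairwise (Function.onFun Disjoint B))
    (huA : (⋃ i, A i) = Set.univ) (huB : (⋃ j, B j) = Set.univ) :
    ∑ i, ∑ j, |(μ (A i ∩ B j)).toReal - (μ (A i)).toReal * (μ (B j)).toReal|
      ≤ 2 * @betaMix Ω m0 μ 𝓐 𝓑 := by
  set e := Fintype.equivFin ι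
  set f := Fintype.equivFin κ
  have hmem : (1/2 : ℝ) * ∑ i, ∑ j,
      |(μ (A i ∩ B j)).toReal - (μ (A i)).toReal * (μ (B j)).toReal| ∈ betaSet μ 𝓐 𝓑 := by
    refine ⟨Fintype.card ι, Fintype.card κ, A ∘ e.symm, B ∘ f.symm,
      fun i => hA _, fun j => hB _, ?_, ?_, ?_, ?_, ?_⟩
    · exact fun i j hij => hdA (e.symm.injective.ne hij)
    · exact fun i j hij => hdB (f.symm.injective.ne hij)
    · rw [← huA]; exact e.symm.surjective.iUnion_comp A
    · rw [← huB]; exact f.symm.surjective.iUnion_comp B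
    · congr 1
      rw [← e.symm.sum_comp (fun i => ∑ j, |(μ (A i ∩ B j)).toReal - (μ (A i)).toReal * (μ (B j)).toReal|)]
      refine Finset.sum_congr rfl fun i _ => ?_
      rw [← f.symm.sum_comp (fun j => |(μ (A (e.symm i) ∩ B j)).toReal - (μ (A (e.symm i))).toReal * (μ (B j)).toReal|)]
      rfl
  have := le_csSup (betaSet_bddAbove μ h𝓐 h𝓑) hmem
  rw [betaMix_eq_sSup]
  linarith


/-- Atom of a finite family of sets determined by a boolean signature. -/
def atomOf (ℱ : Finset (Set Ω)) (σ : {s // s ∈ ℱ} → Bool) : Set Ω :=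
  ⋂ s : {s // s ∈ ℱ}, (if σ s then (s : Set Ω) else (s : Set Ω)ᶜ)

lemma mem_atomOf {ℱ : Finset (Set Ω)} {σ : {s // s ∈ ℱ} → Bool} {x : Ω} :
    x ∈ atomOf ℱ σ ↔ ∀ s : {s // s ∈ ℱ}, (x ∈ (s : Set Ω) ↔ σ s = true) := by
  simp only [atomOf, Set.mem_iInter]
  refine forall_congr' fun s => ?_
  cases hσ : σ s <;> simp [hσ]

lemma measurableSet_atomOf {M : MeasurableSpace Ω} {ℱ : Finset (Set Ω)}
    (hℱ : ∀ s ∈ ℱ, MeasurableSet[M] s) (σ : {s // s ∈ ℱ} → Bool) :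
    MeasurableSet[M] (atomOf ℱ σ) := by
  refine MeasurableSet.iInter fun s => ?_
  split
  · exact hℱ s s.2
  · exact (hℱ s s.2).compl

lemma pairwise_disjoint_atomOf {ℱ : Finset (Set Ω)} :
    Pairwise (Function.onFun Disjoint (atomOf ℱ)) := by
  intro σ τ hne
  rcases Function.ne_iff.1 hne with ⟨s, hs⟩
  rw [Function.onFun, Set.disjoint_left]
  intro x hx hx'
  have h1 := (mem_atomOf.1 hx) s
  have h2 := (mem_atomOf.1 hx') s
  apply hs
  cases hσ : σ s <;> cases hτ : τ s <;> simp [hσ, hτ] at h1 h2 <;> tauto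

open Classical in
lemma exists_mem_atomOf (ℱ : Finset (Set Ω)) (x : Ω) : ∃ σ, x ∈ atomOf ℱ σ := by
  classical
  exact ⟨fun s => decide (x ∈ (s : Set Ω)), mem_atomOf.2 fun s => by simp⟩

lemma iUnion_atomOf (ℱ : Finset (Set Ω)) : (⋃ σ, atomOf ℱ σ) = Set.univ := by
  ext x
  simpa using exists_mem_atomOf ℱ x

lemma eqOn_of_mem_atomOf {ℱ : Finset (Set Ω)} {σ : {s // s ∈ ℱ} → Bool} {x y : Ω}
    (hx : x ∈ atomOf ℱ σ) (hy : y ∈ atomOf ℱ σ) {s : Set Ω} (hs : s ∈ ℱ) :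
    x ∈ s ↔ y ∈ s := by
  rw [(mem_atomOf.1 hx) ⟨s, hs⟩, (mem_atomOf.1 hy) ⟨s, hs⟩]

/-- Finite unions of "rectangles" `a ∩ b` with `a ∈ M`, `b ∈ N`. -/
def IsRectUnion (M N : MeasurableSpace Ω) (s : Set Ω) : Prop :=
  ∃ 𝒞 : Finset (Set Ω × Set Ω),
    (∀ p ∈ 𝒞, MeasurableSet[M] p.1 ∧ MeasurableSet[N] p.2) ∧ s = ⋃ p ∈ 𝒞, p.1 ∩ p.2

lemma isRectUnion_empty (M N : MeasurableSpace Ω) : IsRectUnion M N ∅ :=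
  ⟨∅, by simp, by simp⟩

lemma IsRectUnion.union {M N : MeasurableSpace Ω} {s t : Set Ω}
    (hs : IsRectUnion M N s) (ht : IsRectUnion M N t) : IsRectUnion M N (s ∪ t) := by
  classical
  obtain ⟨𝒞, h𝒞, rfl⟩ := hs
  obtain ⟨𝒟, h𝒟, rfl⟩ := ht
  refine ⟨𝒞 ∪ 𝒟, ?_, ?_⟩
  · intro p hp
    rcases Finset.mem_union.1 hp with hp | hp
    · exact h𝒞 p hp
    · exact h𝒟 p hp
  · rw [Finset.set_biUnion_union]

lemma IsRectUnion.inter {M N : MeasurableSpace Ω} {s t : Set Ω}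
    (hs : IsRectUnion M N s) (ht : IsRectUnion M N t) : IsRectUnion M N (s ∩ t) := by
  classical
  obtain ⟨𝒞, h𝒞, rfl⟩ := hs
  obtain ⟨𝒟, h𝒟, rfl⟩ := ht
  refine ⟨(𝒞 ×ˢ 𝒟).image fun pq => (pq.1.1 ∩ pq.2.1, pq.1.2 ∩ pq.2.2), ?_, ?_⟩
  · intro p hp
    rcases Finset.mem_image.1 hp with ⟨⟨q, r⟩, hqr, rfl⟩
    rcases Finset.mem_product.1 hqr with ⟨hq, hr⟩
    exact ⟨((h𝒞 q hq).1).inter ((h𝒟 r hr).1), ((h𝒞 q hq).2).inter ((h𝒟 r hr).2)⟩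
  · rw [Finset.set_biUnion_finset_image]
    ext x
    simp only [Set.mem_inter_iff, Set.mem_iUnion, exists_prop, Finset.mem_product,
      Set.mem_inter_iff]
    constructor
    · rintro ⟨⟨p, hp, hx1, hx2⟩, ⟨q, hq, hy1, hy2⟩⟩
      exact ⟨⟨p, q⟩, ⟨hp, hq⟩, ⟨⟨hx1, hy1⟩, ⟨hx2, hy2⟩⟩⟩
    · rintro ⟨⟨p, q⟩, ⟨hp, hq⟩, ⟨⟨hx1, hy1⟩, ⟨hx2, hy2⟩⟩⟩
      exact ⟨⟨p, hp, hx1, hx2⟩, ⟨q, hq, hy1, hy2⟩⟩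

lemma isRectUnion_univ (M N : MeasurableSpace Ω) : IsRectUnion M N Set.univ := by
  classical
  exact ⟨{(Set.univ, Set.univ)}, by simp, by simp⟩

lemma IsRectUnion.compl {M N : MeasurableSpace Ω} {s : Set Ω}
    (hs : IsRectUnion M N s) : IsRectUnion M N sᶜ := by
  classical
  obtain ⟨𝒞, h𝒞, rfl⟩ := hs
  induction 𝒞 using Finset.induction_on with
  | empty => simpa using isRectUnion_univ M N
  | @insert a 𝒞' ha ih =>
    have h1 : (⋃ p ∈ insert a 𝒞', p.1 ∩ p.2)ᶜ = (a.1 ∩ a.2)ᶜ ∩ (⋃ p ∈ 𝒞', p.1 ∩ p.2)ᶜ := by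
      rw [Finset.set_biUnion_insert, Set.compl_union]
    rw [h1]
    have hac : IsRectUnion M N (a.1 ∩ a.2)ᶜ := by
      have : (a.1 ∩ a.2)ᶜ = (a.1ᶜ ∩ Set.univ) ∪ (Set.univ ∩ a.2ᶜ) := by
        rw [Set.compl_inter]; simp
      rw [this]
      have hma := h𝒞 a (Finset.mem_insert_self a 𝒞')
      exact IsRectUnion.union ⟨{(a.1ᶜ, Set.univ)}, by simp [hma.1.compl], by simp⟩
        ⟨{(Set.univ, a.2ᶜ)}, by simp [hma.2.compl], by simp⟩
    exact hac.inter (ih fun p hp => h𝒞 p (Finset.mem_insert_of_mem hp))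

lemma isSetAlgebra_isRectUnion (M N : MeasurableSpace Ω) :
    IsSetAlgebra {s : Set Ω | IsRectUnion M N s} where
  empty_mem := isRectUnion_empty M N
  compl_mem := fun _ hs => hs.compl
  union_mem := fun _ _ hs ht => hs.union ht

lemma IsRectUnion.measurableSet_sup {M N : MeasurableSpace Ω} {s : Set Ω}
    (hs : IsRectUnion M N s) : MeasurableSet[M ⊔ N] s := by
  obtain ⟨𝒞, h𝒞, rfl⟩ := hs
  refine MeasurableSet.biUnion 𝒞.countable_toSet fun p hp => MeasurableSet.inter ?_ ?_
  · exact (le_sup_left (a := M) (b := N)) _ (h𝒞 p hp).1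
  · exact (le_sup_right (a := M) (b := N)) _ (h𝒞 p hp).2

lemma generateFrom_isRectUnion (M N : MeasurableSpace Ω) :
    MeasurableSpace.generateFrom {s : Set Ω | IsRectUnion M N s} = M ⊔ N := by
  classical
  refine le_antisymm ?_ ?_
  · rw [MeasurableSpace.generateFrom_le_iff]
    exact fun s hs => hs.measurableSet_sup
  · refine sup_le ?_ ?_ <;> intro s hs
    · refine MeasurableSpace.measurableSet_generateFrom ⟨{(s, Set.univ)}, by simp [hs], by simp⟩
    · refine MeasurableSpace.measurableSet_generateFrom ⟨{(Set.univ, s)}, by simp [hs], by simp⟩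

/-- Approximation of sets in `M ⊔ N` by finite unions of rectangles. -/
lemma approx_rectUnion {m0 : MeasurableSpace Ω} (μ : Measure Ω) [IsProbabilityMeasure μ]
    {M N : MeasurableSpace Ω} (hM : M ≤ m0) (hN : N ≤ m0) {s : Set Ω}
    (hs : MeasurableSet[M ⊔ N] s) {ε : ℝ} (hε : 0 < ε) :
    ∃ t, IsRectUnion M N t ∧ (μ (symmDiff s t)).toReal < ε := by
  have hMN : M ⊔ N ≤ m0 := sup_le hM hN
  have hfin : IsFiniteMeasure (μ.trim hMN) := isFiniteMeasure_trim hMN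
  have hdense :=
    Measure.MeasureDense.of_generateFrom_isSetAlgebra_finite (X := Ω) (m := M ⊔ N)
      (μ := μ.trim hMN) (𝒜 := {s : Set Ω | IsRectUnion M N s})
      (isSetAlgebra_isRectUnion M N) (generateFrom_isRectUnion M N).symm
  obtain ⟨t, ht, hlt⟩ := Measure.MeasureDense.approx (X := Ω) (m := M ⊔ N) (μ := μ.trim hMN) hdense s hs (@measure_ne_top Ω (M ⊔ N) (μ.trim hMN) hfin s) ε hε
  refine ⟨t, ht, ?_⟩
  have hst : MeasurableSet[M ⊔ N] (symmDiff s t) := hs.symmDiff ht.measurableSet_sup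
  rw [trim_measurableSet_eq hMN hst] at hlt
  have : μ (symmDiff s t) < ENNReal.ofReal ε := hlt
  calc (μ (symmDiff s t)).toReal < (ENNReal.ofReal ε).toReal := by
        apply ENNReal.toReal_strict_mono (by simp) this
    _ = ε := ENNReal.toReal_ofReal hε.le



/- ### symmDiff measure estimates -/

lemma subset_union_symmDiff (s t : Set Ω) : s ⊆ t ∪ symmDiff s t := by
  intro x hx
  by_cases h : x ∈ t
  · exact Or.inl h
  · exact Or.inr (Set.mem_symmDiff.2 (Or.inl ⟨hx, h⟩))

lemma abs_toReal_sub_le {m0 : MeasurableSpace Ω} (μ : Measure Ω) [IsProbabilityMeasure μ]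
    (s t : Set Ω) :
    |(μ s).toReal - (μ t).toReal| ≤ (μ (symmDiff s t)).toReal := by
  have key : ∀ u v : Set Ω, (μ u).toReal - (μ v).toReal ≤ (μ (symmDiff u v)).toReal := by
    intro u v
    have h1 : μ u ≤ μ v + μ (symmDiff u v) :=
      le_trans (measure_mono (subset_union_symmDiff u v)) (measure_union_le _ _)
    have h2 : (μ u).toReal ≤ ((μ v) + μ (symmDiff u v)).toReal :=
      ENNReal.toReal_mono (by finiteness) h1
    rw [ENNReal.toReal_add (measure_ne_top μ v) (measure_ne_top μ _)] at h2
    linarith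
  rw [abs_sub_le_iff]
  exact ⟨key s t, by rw [symmDiff_comm]; exact key t s⟩

lemma symmDiff_inter_subset (s t d d' : Set Ω) :
    symmDiff (s ∩ d) (t ∩ d') ⊆ symmDiff s t ∪ symmDiff d d' := by
  intro x hx
  rcases Set.mem_symmDiff.1 hx with ⟨⟨hs, hd⟩, hn⟩ | ⟨⟨ht, hd'⟩, hn⟩
  · by_cases h : x ∈ t
    · have : x ∉ d' := fun hd' => hn ⟨h, hd'⟩
      exact Or.inr (Set.mem_symmDiff.2 (Or.inl ⟨hd, this⟩))
    · exact Or.inl (Set.mem_symmDiff.2 (Or.inl ⟨hs, h⟩))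
  · by_cases h : x ∈ s
    · have : x ∉ d := fun hd => hn ⟨h, hd⟩
      exact Or.inr (Set.mem_symmDiff.2 (Or.inr ⟨hd', this⟩))
    · exact Or.inl (Set.mem_symmDiff.2 (Or.inr ⟨ht, h⟩))

lemma abs_toReal_inter_sub_le {m0 : MeasurableSpace Ω} (μ : Measure Ω) [IsProbabilityMeasure μ]
    (s t d d' : Set Ω) :
    |(μ (s ∩ d)).toReal - (μ (t ∩ d')).toReal|
      ≤ (μ (symmDiff s t)).toReal + (μ (symmDiff d d')).toReal := by
  refine le_trans (abs_toReal_sub_le μ _ _) ?_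
  have h1 : μ (symmDiff (s ∩ d) (t ∩ d')) ≤ μ (symmDiff s t) + μ (symmDiff d d') :=
    le_trans (measure_mono (symmDiff_inter_subset s t d d')) (measure_union_le _ _)
  have h2 := ENNReal.toReal_mono (by finiteness) h1
  rwa [ENNReal.toReal_add (measure_ne_top μ _) (measure_ne_top μ _)] at h2

lemma toReal_measure_le_one {m0 : MeasurableSpace Ω} (μ : Measure Ω) [IsProbabilityMeasure μ]
    (s : Set Ω) : (μ s).toReal ≤ 1 := by
  have := ENNReal.toReal_mono (measure_ne_top μ Set.univ) (measure_mono (Set.subset_univ s))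
  simpa using this

lemma abs_mul_sub_mul {a b c d : ℝ} (hb : 0 ≤ b) (hc : 0 ≤ c) :
    |a * b - c * d| ≤ |a - c| * b + c * |b - d| := by
  have : a * b - c * d = (a - c) * b + c * (b - d) := by ring
  rw [this]
  refine le_trans (abs_add_le _ _) ?_
  rw [abs_mul, abs_mul, abs_of_nonneg hb, abs_of_nonneg hc]

lemma abs_mul_sub_mul' {m0 : MeasurableSpace Ω} (μ : Measure Ω) [IsProbabilityMeasure μ]
    (s t d d' : Set Ω) :
    |(μ s).toReal * (μ d).toReal - (μ t).toReal * (μ d').toReal|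
      ≤ (μ (symmDiff s t)).toReal + (μ (symmDiff d d')).toReal := by
  refine le_trans (abs_mul_sub_mul ENNReal.toReal_nonneg ENNReal.toReal_nonneg) ?_
  have h1 := abs_toReal_sub_le μ s t
  have h2 := abs_toReal_sub_le μ d d'
  have h3 := toReal_measure_le_one μ d
  have h4 := toReal_measure_le_one μ t
  have h5 : |(μ s).toReal - (μ t).toReal| * (μ d).toReal ≤ (μ (symmDiff s t)).toReal := by
    calc |(μ s).toReal - (μ t).toReal| * (μ d).toReal
        ≤ |(μ s).toReal - (μ t).toReal| * 1 := by
          exact mul_le_mul_of_nonneg_left h3 (abs_nonneg _)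
      _ = |(μ s).toReal - (μ t).toReal| := mul_one _
      _ ≤ _ := h1
  have h6 : (μ t).toReal * |(μ d).toReal - (μ d').toReal| ≤ (μ (symmDiff d d')).toReal := by
    calc (μ t).toReal * |(μ d).toReal - (μ d').toReal|
        ≤ 1 * |(μ d).toReal - (μ d').toReal| :=
          mul_le_mul_of_nonneg_right h4 (abs_nonneg _)
      _ = |(μ d).toReal - (μ d').toReal| := one_mul _
      _ ≤ _ := h2
  linarith

/- ### more rect-union closure -/

lemma IsRectUnion.sdiff {M N : MeasurableSpace Ω} {s t : Set Ω}
    (hs : IsRectUnion M N s) (ht : IsRectUnion M N t) : IsRectUnion M N (s \ t) :=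
  hs.inter ht.compl

lemma isRectUnion_biUnion {M N : MeasurableSpace Ω} {ι : Type*} [DecidableEq ι]
    (S : Finset ι) (f : ι → Set Ω) (hf : ∀ i ∈ S, IsRectUnion M N (f i)) :
    IsRectUnion M N (⋃ i ∈ S, f i) := by
  classical
  induction S using Finset.induction_on with
  | empty => simpa using isRectUnion_empty M N
  | @insert a S' ha ih =>
    rw [Finset.set_biUnion_insert]
    exact (hf a (Finset.mem_insert_self a S')).union
      (ih fun i hi => hf i (Finset.mem_insert_of_mem hi))

/- ### disjointification of approximants -/

lemma disjointify {m0 : MeasurableSpace Ω} (μ : Measure Ω) [IsProbabilityMeasure μ]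
    {M N : MeasurableSpace Ω} (hM : M ≤ m0) (hN : N ≤ m0) {n : ℕ} {C : Fin n → Set Ω}
    (hC : ∀ k, MeasurableSet[M ⊔ N] (C k)) (hdC : Pairwise (Function.onFun Disjoint C))
    {δ : ℝ} (hδ : 0 < δ) :
    ∃ U : Fin n → Set Ω, (∀ k, IsRectUnion M N (U k)) ∧
      Pairwise (Function.onFun Disjoint U) ∧
      ∀ k, (μ (symmDiff (C k) (U k))).toReal ≤ n * δ := by
  classical
  choose T hT hTd using fun k => approx_rectUnion μ hM hN (hC k) hδ
  refine ⟨fun k => T k \ ⋃ k' ∈ Finset.univ.filter (fun k' : Fin n => k' < k), T k',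
    ?_, ?_, ?_⟩
  · intro k
    exact (hT k).sdiff (isRectUnion_biUnion _ _ fun i _ => hT i)
  · intro k l hkl
    rw [Function.onFun, Set.disjoint_left]
    rcases hkl.lt_or_gt with h | h
    · intro x hx hx'
      exact ((Set.mem_diff _).1 hx').2 <| Set.mem_biUnion (Finset.mem_filter.2 ⟨Finset.mem_univ k, h⟩)
        ((Set.mem_diff _).1 hx).1
    · intro x hx hx'
      exact ((Set.mem_diff _).1 hx).2 <| Set.mem_biUnion (Finset.mem_filter.2 ⟨Finset.mem_univ l, h⟩)
        ((Set.mem_diff _).1 hx').1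
  · intro k
    have hsub : symmDiff (C k) (T k \ ⋃ k' ∈ Finset.univ.filter (fun k' : Fin n => k' < k), T k')
        ⊆ ⋃ k', symmDiff (C k') (T k') := by
      intro x hx
      rcases Set.mem_symmDiff.1 hx with ⟨hxC, hxn⟩ | ⟨hxU, hxn⟩
      · by_cases hxT : x ∈ T k
        · have : x ∈ ⋃ k' ∈ Finset.univ.filter (fun k' : Fin n => k' < k), T k' := by
            by_contra h
            exact hxn ⟨hxT, h⟩
          rcases Set.mem_iUnion₂.1 this with ⟨k', hk', hxT'⟩
          have hk'lt : k' < k := (Finset.mem_filter.1 hk').2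
          by_cases hxC' : x ∈ C k'
          · exact absurd (Set.disjoint_left.1 (hdC hk'lt.ne) hxC' hxC) (fun h => h)
          · exact Set.mem_iUnion.2 ⟨k', Set.mem_symmDiff.2 (Or.inr ⟨hxT', hxC'⟩)⟩
        · exact Set.mem_iUnion.2 ⟨k, Set.mem_symmDiff.2 (Or.inl ⟨hxC, hxT⟩)⟩
      · have hxT : x ∈ T k := ((Set.mem_diff _).1 hxU).1
        exact Set.mem_iUnion.2 ⟨k, Set.mem_symmDiff.2 (Or.inr ⟨hxT, hxn⟩)⟩
    have h1 : μ (symmDiff (C k) (T k \ ⋃ k' ∈ Finset.univ.filter (fun k' : Fin n => k' < k), T k'))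
        ≤ ∑ k', μ (symmDiff (C k') (T k')) := by
      refine le_trans (measure_mono hsub) ?_
      refine le_trans (measure_iUnion_le _) ?_
      exact le_of_eq (tsum_fintype _)
    have hne : (∑ k' : Fin n, μ (symmDiff (C k') (T k'))) ≠ ⊤ :=
      (ENNReal.sum_lt_top.2 fun i _ => measure_lt_top μ _).ne
    have h2 := ENNReal.toReal_mono hne h1
    rw [ENNReal.toReal_sum (fun i _ => measure_ne_top μ _)] at h2
    refine le_trans h2 ?_
    calc ∑ k', (μ (symmDiff (C k') (T k'))).toReal ≤ ∑ _k' : Fin n, δ :=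
          Finset.sum_le_sum fun i _ => (hTd i).le
      _ = n * δ := by simp [Finset.sum_const, Finset.card_univ, nsmul_eq_mul]


/- ### refinement of disjoint rect-unions into common atom cells -/

universe u in
open scoped Classical in
lemma rect_refine {Ω : Type u} {M N : MeasurableSpace Ω} {n : ℕ} {U : Fin n → Set Ω}
    (hU : ∀ k, IsRectUnion M N (U k)) (hdU : Pairwise (Function.onFun Disjoint U)) :
    ∃ (I J : Type u) (_ : Fintype I) (_ : Fintype J) (A : I → Set Ω) (B : J → Set Ω)
      (S : Fin n → Finset (I × J)),
      (∀ i, MeasurableSet[M] (A i)) ∧ (∀ j, MeasurableSet[N] (B j)) ∧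
      Pairwise (Function.onFun Disjoint A) ∧ Pairwise (Function.onFun Disjoint B) ∧
      (⋃ i, A i) = Set.univ ∧ (⋃ j, B j) = Set.univ ∧
      (∀ k, U k = ⋃ p ∈ S k, A p.1 ∩ B p.2) ∧
      (∀ k l, k ≠ l → Disjoint (S k) (S l)) := by
  choose 𝒞 h𝒞 hUeq using fun k => hU k
  set ℱ : Finset (Set Ω) := Finset.univ.biUnion (fun k => (𝒞 k).image Prod.fst) with hℱ
  set 𝒢 : Finset (Set Ω) := Finset.univ.biUnion (fun k => (𝒞 k).image Prod.snd) with h𝒢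
  set I := ({s // s ∈ ℱ} → Bool)
  set J := ({s // s ∈ 𝒢} → Bool)
  have hmF : ∀ s ∈ ℱ, MeasurableSet[M] s := by
    intro s hs
    rcases Finset.mem_biUnion.1 hs with ⟨k, -, hk⟩
    rcases Finset.mem_image.1 hk with ⟨p, hp, rfl⟩
    exact (h𝒞 k p hp).1
  have hmG : ∀ s ∈ 𝒢, MeasurableSet[N] s := by
    intro s hs
    rcases Finset.mem_biUnion.1 hs with ⟨k, -, hk⟩
    rcases Finset.mem_image.1 hk with ⟨p, hp, rfl⟩
    exact (h𝒞 k p hp).2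
  -- invariance of the U k under the cells
  have hinv : ∀ k x y, (∀ s ∈ ℱ, (x ∈ s ↔ y ∈ s)) → (∀ s ∈ 𝒢, (x ∈ s ↔ y ∈ s)) →
      (x ∈ U k ↔ y ∈ U k) := by
    intro k x y hxF hxG
    rw [hUeq k]
    simp only [Set.mem_iUnion, exists_prop]
    constructor
    · rintro ⟨p, hp, hx1, hx2⟩
      refine ⟨p, hp, ?_, ?_⟩
      · exact (hxF p.1 (Finset.mem_biUnion.2 ⟨k, Finset.mem_univ k,
          Finset.mem_image.2 ⟨p, hp, rfl⟩⟩)).1 hx1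
      · exact (hxG p.2 (Finset.mem_biUnion.2 ⟨k, Finset.mem_univ k,
          Finset.mem_image.2 ⟨p, hp, rfl⟩⟩)).1 hx2
    · rintro ⟨p, hp, hx1, hx2⟩
      refine ⟨p, hp, ?_, ?_⟩
      · exact (hxF p.1 (Finset.mem_biUnion.2 ⟨k, Finset.mem_univ k,
          Finset.mem_image.2 ⟨p, hp, rfl⟩⟩)).2 hx1
      · exact (hxG p.2 (Finset.mem_biUnion.2 ⟨k, Finset.mem_univ k,
          Finset.mem_image.2 ⟨p, hp, rfl⟩⟩)).2 hx2
  refine ⟨I, J, inferInstance, inferInstance, atomOf ℱ, atomOf 𝒢,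
    fun k => Finset.univ.filter (fun p : I × J =>
      ((atomOf ℱ p.1 ∩ atomOf 𝒢 p.2) ∩ U k).Nonempty),
    fun σ => measurableSet_atomOf hmF σ, fun τ => measurableSet_atomOf hmG τ,
    pairwise_disjoint_atomOf, pairwise_disjoint_atomOf, iUnion_atomOf ℱ, iUnion_atomOf 𝒢,
    ?_, ?_⟩
  · -- each U k is the union of its cells
    have hcell_sub : ∀ k (p : I × J), ((atomOf ℱ p.1 ∩ atomOf 𝒢 p.2) ∩ U k).Nonempty →
        atomOf ℱ p.1 ∩ atomOf 𝒢 p.2 ⊆ U k := by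
      rintro k p ⟨z, ⟨⟨hz1, hz2⟩, hzU⟩⟩
      rintro x ⟨hx1, hx2⟩
      refine (hinv k x z ?_ ?_).2 hzU
      · exact fun s hs => eqOn_of_mem_atomOf hx1 hz1 hs
      · exact fun s hs => eqOn_of_mem_atomOf hx2 hz2 hs
    intro k
    apply Set.Subset.antisymm
    · intro x hx
      obtain ⟨σ, hσ⟩ := exists_mem_atomOf ℱ x
      obtain ⟨τ, hτ⟩ := exists_mem_atomOf 𝒢 x
      have hpmem : ((σ, τ) : I × J) ∈ Finset.univ.filter (fun p : I × J =>
          ((atomOf ℱ p.1 ∩ atomOf 𝒢 p.2) ∩ U k).Nonempty) :=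
        Finset.mem_filter.2 ⟨Finset.mem_univ _, ⟨x, ⟨⟨hσ, hτ⟩, hx⟩⟩⟩
      exact Set.mem_biUnion hpmem ⟨hσ, hτ⟩
    · intro x hx
      rcases Set.mem_iUnion₂.1 hx with ⟨p, hp, hxp⟩
      exact hcell_sub k p (Finset.mem_filter.1 hp).2 hxp
  · -- the index sets are disjoint
    intro k l hkl
    rw [Finset.disjoint_left]
    intro p hpk hpl
    obtain ⟨z, hzc, hzU⟩ := (Finset.mem_filter.1 hpk).2
    obtain ⟨w, hwc, hwU⟩ := (Finset.mem_filter.1 hpl).2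
    have hzl : z ∈ U l := by
      refine (hinv l z w ?_ ?_).2 hwU
      · exact fun s hs => eqOn_of_mem_atomOf hzc.1 hwc.1 hs
      · exact fun s hs => eqOn_of_mem_atomOf hzc.2 hwc.2 hs
    exact Set.disjoint_left.1 (hdU hkl) hzU hzl

/- ### summation helpers -/

lemma sum_over_disjoint_finsets {P : Type*} [Fintype P] [DecidableEq P] {n : ℕ}
    (S : Fin n → Finset P) (hdis : ∀ k l, k ≠ l → Disjoint (S k) (S l))
    (g : P → ℝ) (hg : ∀ p, 0 ≤ g p) :
    ∑ k, ∑ p ∈ S k, g p ≤ ∑ p, g p := by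
  rw [← Finset.sum_biUnion (fun k _ l _ hkl => hdis k l hkl)]
  exact Finset.sum_le_sum_of_subset_of_nonneg (Finset.subset_univ _) fun p _ _ => hg p

lemma sum_prod_mul {I J I' J' : Type*} [Fintype I] [Fintype J] [Fintype I'] [Fintype J']
    (f : I → I' → ℝ) (g : J → J' → ℝ) :
    ∑ p : I × J, ∑ q : I' × J', f p.1 q.1 * g p.2 q.2
      = (∑ i, ∑ i', f i i') * (∑ j, ∑ j', g j j') := by
  have h1 : ∀ p : I × J, ∑ q : I' × J', f p.1 q.1 * g p.2 q.2
      = (∑ i', f p.1 i') * (∑ j', g p.2 j') := by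
    intro p
    rw [Finset.sum_mul_sum, Fintype.sum_prod_type]
  calc ∑ p : I × J, ∑ q : I' × J', f p.1 q.1 * g p.2 q.2
      = ∑ p : I × J, (∑ i', f p.1 i') * (∑ j', g p.2 j') := Finset.sum_congr rfl fun p _ => h1 p
    _ = ∑ i, ∑ j, (∑ i', f i i') * (∑ j', g j j') := Fintype.sum_prod_type _
    _ = (∑ i, ∑ i', f i i') * (∑ j, ∑ j', g j j') := by
        rw [Finset.sum_mul_sum]

omit [IsProbabilityMeasure μ] in
lemma biUnion_inter_biUnion {P Q : Type*} (S : Finset P) (S' : Finset Q)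
    (c : P → Set Ω) (d : Q → Set Ω) :
    (⋃ p ∈ S, c p) ∩ (⋃ q ∈ S', d q) = ⋃ r ∈ S ×ˢ S', c r.1 ∩ d r.2 := by
  ext x
  simp only [Set.mem_inter_iff, Set.mem_iUnion, exists_prop, Finset.mem_product]
  constructor
  · rintro ⟨⟨p, hp, hx⟩, ⟨q, hq, hy⟩⟩
    exact ⟨(p, q), ⟨hp, hq⟩, hx, hy⟩
  · rintro ⟨⟨p, q⟩, ⟨hp, hq⟩, hx, hy⟩
    exact ⟨⟨p, hp, hx⟩, ⟨q, hq, hy⟩⟩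

lemma toReal_measure_biUnion {P : Type*} (S : Finset P) (c : P → Set Ω)
    (hm : ∀ p, MeasurableSet (c p)) (hd : Pairwise (Function.onFun Disjoint c)) :
    (μ (⋃ p ∈ S, c p)).toReal = ∑ p ∈ S, (μ (c p)).toReal := by
  rw [measure_biUnion_finset (hd.set_pairwise _) (fun p _ => hm p),
    ENNReal.toReal_sum (fun p _ => measure_ne_top μ _)]

/- ### the key independence bound for cell partitions -/

lemma rect_cells_bound {F₁ F₂ G₁ G₂ : MeasurableSpace Ω}
    (hF₁ : F₁ ≤ m0) (hF₂ : F₂ ≤ m0) (hG₁ : G₁ ≤ m0) (hG₂ : G₂ ≤ m0)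
    (hindep : @ProbabilityTheory.Indep Ω (F₁ ⊔ F₂) (G₁ ⊔ G₂) m0 μ)
    {I J I' J' : Type*} [Fintype I] [Fintype J] [Fintype I'] [Fintype J']
    {A : I → Set Ω} {B : J → Set Ω} {A' : I' → Set Ω} {B' : J' → Set Ω}
    (hA : ∀ i, MeasurableSet[F₁] (A i)) (hB : ∀ j, MeasurableSet[G₁] (B j))
    (hA' : ∀ i, MeasurableSet[F₂] (A' i)) (hB' : ∀ j, MeasurableSet[G₂] (B' j))
    (hdA : Pairwise (Function.onFun Disjoint A)) (hdB : Pairwise (Function.onFun Disjoint B))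
    (hdA' : Pairwise (Function.onFun Disjoint A')) (hdB' : Pairwise (Function.onFun Disjoint B'))
    (huA : (⋃ i, A i) = Set.univ) (huB : (⋃ j, B j) = Set.univ)
    (huA' : (⋃ i, A' i) = Set.univ) (huB' : (⋃ j, B' j) = Set.univ) :
    ∑ p : I × J, ∑ q : I' × J',
      |(μ ((A p.1 ∩ B p.2) ∩ (A' q.1 ∩ B' q.2))).toReal
        - (μ (A p.1 ∩ B p.2)).toReal * (μ (A' q.1 ∩ B' q.2)).toReal|
      ≤ 2 * @betaMix Ω m0 μ F₁ F₂ + 2 * @betaMix Ω m0 μ G₁ G₂ := by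
  have hmul : ∀ s t : Set Ω, MeasurableSet[F₁ ⊔ F₂] s → MeasurableSet[G₁ ⊔ G₂] t →
      μ (s ∩ t) = μ s * μ t := fun s t hs ht =>
    (hindep.indepSet_of_measurableSet hs ht).measure_inter_eq_mul
  set f : I → I' → ℝ := fun i i' =>
    |(μ (A i ∩ A' i')).toReal - (μ (A i)).toReal * (μ (A' i')).toReal| with hf
  set g : J → J' → ℝ := fun j j' => (μ (B j ∩ B' j')).toReal with hg
  set c : I → I' → ℝ := fun i i' => (μ (A i)).toReal * (μ (A' i')).toReal with hc
  set h : J → J' → ℝ := fun j j' =>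
    |(μ (B j ∩ B' j')).toReal - (μ (B j)).toReal * (μ (B' j')).toReal| with hh
  have key : ∀ (p : I × J) (q : I' × J'),
      |(μ ((A p.1 ∩ B p.2) ∩ (A' q.1 ∩ B' q.2))).toReal
        - (μ (A p.1 ∩ B p.2)).toReal * (μ (A' q.1 ∩ B' q.2)).toReal|
      ≤ f p.1 q.1 * g p.2 q.2 + c p.1 q.1 * h p.2 q.2 := by
    rintro ⟨i, j⟩ ⟨i', j'⟩
    have e1 : (A i ∩ B j) ∩ (A' i' ∩ B' j') = (A i ∩ A' i') ∩ (B j ∩ B' j') := by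
      ext x; simp only [Set.mem_inter_iff]; tauto
    have hmA : MeasurableSet[F₁ ⊔ F₂] (A i ∩ A' i') :=
      ((le_sup_left : F₁ ≤ F₁ ⊔ F₂) _ (hA i)).inter ((le_sup_right : F₂ ≤ F₁ ⊔ F₂) _ (hA' i'))
    have hmB : MeasurableSet[G₁ ⊔ G₂] (B j ∩ B' j') :=
      ((le_sup_left : G₁ ≤ G₁ ⊔ G₂) _ (hB j)).inter ((le_sup_right : G₂ ≤ G₁ ⊔ G₂) _ (hB' j'))
    have h1 : μ ((A i ∩ B j) ∩ (A' i' ∩ B' j')) = μ (A i ∩ A' i') * μ (B j ∩ B' j') := by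
      rw [e1]; exact hmul _ _ hmA hmB
    have h2 : μ (A i ∩ B j) = μ (A i) * μ (B j) :=
      hmul _ _ ((le_sup_left : F₁ ≤ F₁ ⊔ F₂) _ (hA i)) ((le_sup_left : G₁ ≤ G₁ ⊔ G₂) _ (hB j))
    have h3 : μ (A' i' ∩ B' j') = μ (A' i') * μ (B' j') :=
      hmul _ _ ((le_sup_right : F₂ ≤ F₁ ⊔ F₂) _ (hA' i'))
        ((le_sup_right : G₂ ≤ G₁ ⊔ G₂) _ (hB' j'))
    rw [h1, h2, h3, ENNReal.toReal_mul, ENNReal.toReal_mul, ENNReal.toReal_mul]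
    have e2 : (μ (A i)).toReal * (μ (B j)).toReal
        * ((μ (A' i')).toReal * (μ (B' j')).toReal)
        = ((μ (A i)).toReal * (μ (A' i')).toReal)
          * ((μ (B j)).toReal * (μ (B' j')).toReal) := by ring
    rw [e2]
    exact abs_mul_sub_mul ENNReal.toReal_nonneg
      (mul_nonneg ENNReal.toReal_nonneg ENNReal.toReal_nonneg)
  have hsum1 : ∑ j, ∑ j', g j j' = 1 :=
    sum_sum_measure_inter μ (fun j => hG₁ _ (hB j)) (fun j' => hG₂ _ (hB' j'))
      hdB hdB' huB huB'
  have hsum2 : ∑ i, ∑ i', c i i' = 1 :=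
    sum_sum_mul_measure μ (fun i => hF₁ _ (hA i)) (fun i' => hF₂ _ (hA' i'))
      hdA hdA' huA huA'
  have hbF : ∑ i, ∑ i', f i i' ≤ 2 * @betaMix Ω m0 μ F₁ F₂ :=
    le_betaMix μ hF₁ hF₂ hA hA' hdA hdA' huA huA'
  have hbG : ∑ j, ∑ j', h j j' ≤ 2 * @betaMix Ω m0 μ G₁ G₂ :=
    le_betaMix μ hG₁ hG₂ hB hB' hdB hdB' huB huB'
  calc ∑ p : I × J, ∑ q : I' × J',
      |(μ ((A p.1 ∩ B p.2) ∩ (A' q.1 ∩ B' q.2))).toReal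
        - (μ (A p.1 ∩ B p.2)).toReal * (μ (A' q.1 ∩ B' q.2)).toReal|
      ≤ ∑ p : I × J, ∑ q : I' × J', (f p.1 q.1 * g p.2 q.2 + c p.1 q.1 * h p.2 q.2) :=
        Finset.sum_le_sum fun p _ => Finset.sum_le_sum fun q _ => key p q
    _ = (∑ p : I × J, ∑ q : I' × J', f p.1 q.1 * g p.2 q.2)
        + ∑ p : I × J, ∑ q : I' × J', c p.1 q.1 * h p.2 q.2 := by
        rw [← Finset.sum_add_distrib]
        exact Finset.sum_congr rfl fun p _ => Finset.sum_add_distrib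
    _ = (∑ i, ∑ i', f i i') * (∑ j, ∑ j', g j j')
        + (∑ i, ∑ i', c i i') * (∑ j, ∑ j', h j j') := by
        rw [sum_prod_mul, sum_prod_mul]
    _ = (∑ i, ∑ i', f i i') + (∑ j, ∑ j', h j j') := by
        rw [hsum1, hsum2, mul_one, one_mul]
    _ ≤ 2 * @betaMix Ω m0 μ F₁ F₂ + 2 * @betaMix Ω m0 μ G₁ G₂ := add_le_add hbF hbG

end BetaMixAux

/-- Subadditivity of the β-mixing coefficient under independent joins:
if `σ(F₁,F₂)` is independent of `σ(G₁,G₂)`, then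
`β(σ(F₁,G₁), σ(F₂,G₂)) ≤ β(F₁,F₂) + β(G₁,G₂)`. -/
theorem betaMix_join_le {Ω : Type*} {m0 : MeasurableSpace Ω}
    (μ : Measure Ω) (hprob : IsProbabilityMeasure μ)
    (F₁ F₂ G₁ G₂ : MeasurableSpace Ω)
    (hF₁ : F₁ ≤ m0) (hF₂ : F₂ ≤ m0) (hG₁ : G₁ ≤ m0) (hG₂ : G₂ ≤ m0)
    (hindep : @ProbabilityTheory.Indep Ω (F₁ ⊔ F₂) (G₁ ⊔ G₂) m0 μ) :
    @betaMix Ω m0 μ (F₁ ⊔ G₁) (F₂ ⊔ G₂) ≤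
      @betaMix Ω m0 μ F₁ F₂ + @betaMix Ω m0 μ G₁ G₂ := by
  classical
  haveI := hprob
  have key : ∀ x ∈ BetaMixAux.betaSet μ (F₁ ⊔ G₁) (F₂ ⊔ G₂),
      x ≤ @betaMix Ω m0 μ F₁ F₂ + @betaMix Ω m0 μ G₁ G₂ := by
    rintro x ⟨n, m, C, D, hC, hD, hdC, hdD, huC, huD, rfl⟩
    refine le_of_forall_pos_le_add ?_
    intro ε hε
    set K : ℝ := (n : ℝ) * m * (n + m) with hK
    have hKnn : 0 ≤ K := by positivity
    set δ : ℝ := ε / (K + 1) with hδdef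
    have hδ : 0 < δ := by positivity
    obtain ⟨U, hUrect, hdU, hUerr⟩ := BetaMixAux.disjointify μ hF₁ hG₁ hC hdC hδ
    obtain ⟨V, hVrect, hdV, hVerr⟩ := BetaMixAux.disjointify μ hF₂ hG₂ hD hdD hδ
    obtain ⟨I, J, hI, hJ, A, B, S, hA, hB, hdA, hdB, huA, huB, hSU, hSdis⟩ :=
      BetaMixAux.rect_refine hUrect hdU
    obtain ⟨I', J', hI', hJ', A', B', S', hA', hB', hdA', hdB', huA', huB', hSV, hSdis'⟩ :=
      BetaMixAux.rect_refine hVrect hdV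
    haveI := hI; haveI := hJ; haveI := hI'; haveI := hJ'
    set cA : I × J → Set Ω := fun p => A p.1 ∩ B p.2 with hcA
    set cB : I' × J' → Set Ω := fun q => A' q.1 ∩ B' q.2 with hcB
    have hmcA : ∀ p, MeasurableSet[m0] (cA p) := fun p => (hF₁ _ (hA p.1)).inter (hG₁ _ (hB p.2))
    have hmcB : ∀ q, MeasurableSet[m0] (cB q) := fun q => (hF₂ _ (hA' q.1)).inter (hG₂ _ (hB' q.2))
    have hdcA : Pairwise (Function.onFun Disjoint cA) := BetaMixAux.prod_pairwise_disjoint hdA hdB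
    have hdcB : Pairwise (Function.onFun Disjoint cB) :=
      BetaMixAux.prod_pairwise_disjoint hdA' hdB'
    set g : I × J → I' × J' → ℝ := fun p q =>
      |(μ (cA p ∩ cB q)).toReal - (μ (cA p)).toReal * (μ (cB q)).toReal| with hgdef
    have hgnn : ∀ p q, 0 ≤ g p q := fun p q => abs_nonneg _
    -- decomposition of the (U, V) sums into cells
    have hdecomp : ∀ (k : Fin n) (l : Fin m),
        (μ (U k ∩ V l)).toReal - (μ (U k)).toReal * (μ (V l)).toReal
        = ∑ p ∈ S k, ∑ q ∈ S' l,
            ((μ (cA p ∩ cB q)).toReal - (μ (cA p)).toReal * (μ (cB q)).toReal) := by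
      intro k l
      have h1 : (μ (U k ∩ V l)).toReal = ∑ p ∈ S k, ∑ q ∈ S' l, (μ (cA p ∩ cB q)).toReal := by
        rw [hSU k, hSV l, BetaMixAux.biUnion_inter_biUnion,
          BetaMixAux.toReal_measure_biUnion μ (S k ×ˢ S' l) (fun r => cA r.1 ∩ cB r.2)
            (fun r => (hmcA r.1).inter (hmcB r.2))
            (BetaMixAux.prod_pairwise_disjoint hdcA hdcB),
          Finset.sum_product]
      have h2 : (μ (U k)).toReal = ∑ p ∈ S k, (μ (cA p)).toReal := by
        rw [hSU k]; exact BetaMixAux.toReal_measure_biUnion μ _ _ hmcA hdcA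
      have h3 : (μ (V l)).toReal = ∑ q ∈ S' l, (μ (cB q)).toReal := by
        rw [hSV l]; exact BetaMixAux.toReal_measure_biUnion μ _ _ hmcB hdcB
      rw [h1, h2, h3, Finset.sum_mul_sum, ← Finset.sum_sub_distrib]
      exact Finset.sum_congr rfl fun p _ => (Finset.sum_sub_distrib _ _).symm
    -- termwise error bound
    have herr : ∀ (k : Fin n) (l : Fin m),
        |(μ (C k ∩ D l)).toReal - (μ (C k)).toReal * (μ (D l)).toReal|
        ≤ |(μ (U k ∩ V l)).toReal - (μ (U k)).toReal * (μ (V l)).toReal|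
          + 2 * ((μ (symmDiff (C k) (U k))).toReal + (μ (symmDiff (D l) (V l))).toReal) := by
      intro k l
      have t1 := BetaMixAux.abs_toReal_inter_sub_le μ (C k) (U k) (D l) (V l)
      have t2 := BetaMixAux.abs_mul_sub_mul' μ (C k) (U k) (D l) (V l)
      have e : (μ (C k ∩ D l)).toReal - (μ (C k)).toReal * (μ (D l)).toReal
          = (((μ (U k ∩ V l)).toReal - (μ (U k)).toReal * (μ (V l)).toReal)
            + ((μ (C k ∩ D l)).toReal - (μ (U k ∩ V l)).toReal))
            - ((μ (C k)).toReal * (μ (D l)).toReal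
              - (μ (U k)).toReal * (μ (V l)).toReal) := by ring
      rw [e]
      refine le_trans (abs_sub _ _) ?_
      have h4 := abs_add_le ((μ (U k ∩ V l)).toReal - (μ (U k)).toReal * (μ (V l)).toReal)
        ((μ (C k ∩ D l)).toReal - (μ (U k ∩ V l)).toReal)
      linarith
    -- the main cell bound
    have hcells : ∑ p : I × J, ∑ q : I' × J', g p q
        ≤ 2 * @betaMix Ω m0 μ F₁ F₂ + 2 * @betaMix Ω m0 μ G₁ G₂ :=
      BetaMixAux.rect_cells_bound μ hF₁ hF₂ hG₁ hG₂ hindep hA hB hA' hB'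
        hdA hdB hdA' hdB' huA huB huA' huB'
    -- sum of |u| over k, l
    have hmainsum : ∑ k, ∑ l, |(μ (U k ∩ V l)).toReal - (μ (U k)).toReal * (μ (V l)).toReal|
        ≤ 2 * @betaMix Ω m0 μ F₁ F₂ + 2 * @betaMix Ω m0 μ G₁ G₂ := by
      have step1 : ∀ (k : Fin n) (l : Fin m),
          |(μ (U k ∩ V l)).toReal - (μ (U k)).toReal * (μ (V l)).toReal|
          ≤ ∑ p ∈ S k, ∑ q ∈ S' l, g p q := by
        intro k l
        rw [hdecomp k l]
        refine le_trans (Finset.abs_sum_le_sum_abs _ _) ?_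
        exact Finset.sum_le_sum fun p _ => Finset.abs_sum_le_sum_abs _ _
      calc ∑ k, ∑ l, |(μ (U k ∩ V l)).toReal - (μ (U k)).toReal * (μ (V l)).toReal|
          ≤ ∑ k, ∑ l, ∑ p ∈ S k, ∑ q ∈ S' l, g p q :=
            Finset.sum_le_sum fun k _ => Finset.sum_le_sum fun l _ => step1 k l
        _ = ∑ k, ∑ p ∈ S k, ∑ l, ∑ q ∈ S' l, g p q :=
            Finset.sum_congr rfl fun k _ => Finset.sum_comm
        _ ≤ ∑ k, ∑ p ∈ S k, ∑ q : I' × J', g p q := by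
            refine Finset.sum_le_sum fun k _ => Finset.sum_le_sum fun p _ => ?_
            exact BetaMixAux.sum_over_disjoint_finsets S' hSdis' (g p) (hgnn p)
        _ ≤ ∑ p : I × J, ∑ q : I' × J', g p q := by
            refine BetaMixAux.sum_over_disjoint_finsets S hSdis
              (fun p => ∑ q : I' × J', g p q) (fun p => Finset.sum_nonneg fun q _ => hgnn p q)
        _ ≤ 2 * @betaMix Ω m0 μ F₁ F₂ + 2 * @betaMix Ω m0 μ G₁ G₂ := hcells
    -- the error sums
    have herrsum : ∑ k, ∑ l, ((μ (symmDiff (C k) (U k))).toReal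
          + (μ (symmDiff (D l) (V l))).toReal) ≤ K * δ := by
      have h1 : ∀ k : Fin n, ∑ l : Fin m, ((μ (symmDiff (C k) (U k))).toReal
          + (μ (symmDiff (D l) (V l))).toReal)
          = m * (μ (symmDiff (C k) (U k))).toReal
            + ∑ l : Fin m, (μ (symmDiff (D l) (V l))).toReal := by
        intro k
        rw [Finset.sum_add_distrib, Finset.sum_const, Finset.card_univ, Fintype.card_fin,
          nsmul_eq_mul]
      calc ∑ k, ∑ l, ((μ (symmDiff (C k) (U k))).toReal + (μ (symmDiff (D l) (V l))).toReal)
          = ∑ k : Fin n, (m * (μ (symmDiff (C k) (U k))).toReal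
            + ∑ l : Fin m, (μ (symmDiff (D l) (V l))).toReal) :=
            Finset.sum_congr rfl fun k _ => h1 k
        _ = m * (∑ k : Fin n, (μ (symmDiff (C k) (U k))).toReal)
            + n * ∑ l : Fin m, (μ (symmDiff (D l) (V l))).toReal := by
            rw [Finset.sum_add_distrib, ← Finset.mul_sum, Finset.sum_const, Finset.card_univ,
              Fintype.card_fin, nsmul_eq_mul]
        _ ≤ m * (n * (n * δ)) + n * (m * (m * δ)) := by
            have e1 : ∑ k : Fin n, (μ (symmDiff (C k) (U k))).toReal ≤ n * (n * δ) := by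
              calc ∑ k : Fin n, (μ (symmDiff (C k) (U k))).toReal
                  ≤ ∑ _k : Fin n, (n : ℝ) * δ := Finset.sum_le_sum fun k _ => hUerr k
                _ = n * (n * δ) := by
                    rw [Finset.sum_const, Finset.card_univ, Fintype.card_fin, nsmul_eq_mul]
            have e2 : ∑ l : Fin m, (μ (symmDiff (D l) (V l))).toReal ≤ m * (m * δ) := by
              calc ∑ l : Fin m, (μ (symmDiff (D l) (V l))).toReal
                  ≤ ∑ _l : Fin m, (m : ℝ) * δ := Finset.sum_le_sum fun l _ => hVerr l
                _ = m * (m * δ) := by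
                    rw [Finset.sum_const, Finset.card_univ, Fintype.card_fin, nsmul_eq_mul]
            have hm0 : (0:ℝ) ≤ m := Nat.cast_nonneg m
            have hn0 : (0:ℝ) ≤ n := Nat.cast_nonneg n
            exact add_le_add (mul_le_mul_of_nonneg_left e1 hm0)
              (mul_le_mul_of_nonneg_left e2 hn0)
        _ = K * δ := by rw [hK]; ring
    -- put everything together
    have hfinal : ∑ k, ∑ l, |(μ (C k ∩ D l)).toReal - (μ (C k)).toReal * (μ (D l)).toReal|
        ≤ 2 * @betaMix Ω m0 μ F₁ F₂ + 2 * @betaMix Ω m0 μ G₁ G₂ + 2 * (K * δ) := by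
      calc ∑ k, ∑ l, |(μ (C k ∩ D l)).toReal - (μ (C k)).toReal * (μ (D l)).toReal|
          ≤ ∑ k, ∑ l, (|(μ (U k ∩ V l)).toReal - (μ (U k)).toReal * (μ (V l)).toReal|
            + 2 * ((μ (symmDiff (C k) (U k))).toReal + (μ (symmDiff (D l) (V l))).toReal)) :=
            Finset.sum_le_sum fun k _ => Finset.sum_le_sum fun l _ => herr k l
        _ = (∑ k, ∑ l, |(μ (U k ∩ V l)).toReal - (μ (U k)).toReal * (μ (V l)).toReal|)
            + 2 * ∑ k, ∑ l, ((μ (symmDiff (C k) (U k))).toReal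
              + (μ (symmDiff (D l) (V l))).toReal) := by
            rw [Finset.mul_sum, ← Finset.sum_add_distrib]
            refine Finset.sum_congr rfl fun k _ => ?_
            rw [Finset.mul_sum, ← Finset.sum_add_distrib]
        _ ≤ (2 * @betaMix Ω m0 μ F₁ F₂ + 2 * @betaMix Ω m0 μ G₁ G₂) + 2 * (K * δ) := by
            refine add_le_add hmainsum ?_
            have := herrsum
            nlinarith [herrsum]
        _ = _ := by ring
    have hKδ : K * δ ≤ ε := by
      rw [hδdef]
      rw [div_eq_mul_inv]
      have hpos : (0:ℝ) < K + 1 := by linarith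
      calc K * (ε * (K + 1)⁻¹) = (K / (K + 1)) * ε := by ring
        _ ≤ 1 * ε := by
            refine mul_le_mul_of_nonneg_right ?_ hε.le
            rw [div_le_one hpos]; linarith
        _ = ε := one_mul ε
    calc (1/2 : ℝ) * ∑ k, ∑ l, |(μ (C k ∩ D l)).toReal
          - (μ (C k)).toReal * (μ (D l)).toReal|
        ≤ (1/2) * (2 * @betaMix Ω m0 μ F₁ F₂ + 2 * @betaMix Ω m0 μ G₁ G₂ + 2 * (K * δ)) := by
          refine mul_le_mul_of_nonneg_left hfinal (by norm_num)
      _ = @betaMix Ω m0 μ F₁ F₂ + @betaMix Ω m0 μ G₁ G₂ + K * δ := by ring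
      _ ≤ @betaMix Ω m0 μ F₁ F₂ + @betaMix Ω m0 μ G₁ G₂ + ε := by linarith
  refine Real.sSup_le key ?_
  exact add_nonneg (BetaMixAux.betaMix_nonneg μ hF₁ hF₂) (BetaMixAux.betaMix_nonneg μ hG₁ hG₂)
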